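/- If a linear map A : ℂ^{m×n} → ℂ^p satisfies ‖AX‖₂² ≤ (1 + δ)‖X‖_F² for all X with rank(X) ≤ r, then for every matrix X ∈ ℂ^{m×n} (of arbitrary rank), ‖AX‖₂ ≤ √(1+δ) · ( ‖X‖_F + ‖X‖_*/√r ), where ‖X‖_* is the nuclear norm (sum of singular values) of X. -/

import Mathlib

open scoped BigOperators Matrix ComplexOrder

/-- Frobenius (trace) inner product on complex matrices: `⟪X, Y⟫ = tr(Yᴴ X)`. -/
noncomputable def frobInner {m n : ℕ} (X Y : Matrix (Fin m) (Fin n) ℂ) : ℂ :=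
  (Yᴴ * X).trace

/-- Frobenius norm of a complex matrix. -/
noncomputable def frobNorm {m n : ℕ} (X : Matrix (Fin m) (Fin n) ℂ) : ℝ :=
  Real.sqrt (∑ i, ∑ j, ‖X i j‖ ^ 2)

/-- Euclidean norm on `ℂ^p`. -/
noncomputable def eNorm {p : ℕ} (v : Fin p → ℂ) : ℝ :=
  Real.sqrt (∑ k, ‖v k‖ ^ 2)

/-- Hermitian inner product on `ℂ^p` (linear in the first argument). -/
noncomputable def eInner {p : ℕ} (u v : Fin p → ℂ) : ℂ :=
  ∑ k, (starRingEnd ℂ) (v k) * u k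

/-- `A` satisfies the rank-`r` restricted isometry inequalities with constant `δ`:
`(1-δ)‖X‖_F² ≤ ‖A X‖₂² ≤ (1+δ)‖X‖_F²` for all `X` with `rank X ≤ r`. -/
def RIPwith {m n p : ℕ} (A : Matrix (Fin m) (Fin n) ℂ →ₗ[ℂ] (Fin p → ℂ)) (r : ℕ) (δ : ℝ) : Prop :=
  ∀ X : Matrix (Fin m) (Fin n) ℂ, X.rank ≤ r →
    (1 - δ) * frobNorm X ^ 2 ≤ eNorm (A X) ^ 2 ∧ eNorm (A X) ^ 2 ≤ (1 + δ) * frobNorm X ^ 2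

/-- `P` is the orthogonal projection onto the span of `S`
with respect to the Frobenius inner product. -/
def IsOrthProjOn {m n : ℕ} (P : Matrix (Fin m) (Fin n) ℂ →ₗ[ℂ] Matrix (Fin m) (Fin n) ℂ)
    (S : Set (Matrix (Fin m) (Fin n) ℂ)) : Prop :=
  (∀ X, P (P X) = P X) ∧ LinearMap.range P = Submodule.span ℂ S ∧
    (∀ X Y, frobInner (P X) Y = frobInner X (P Y))

/-- `B` is the adjoint of `A` w.r.t. the Frobenius and Euclidean inner products. -/
def IsAdjoint {m n p : ℕ} (A : Matrix (Fin m) (Fin n) ℂ →ₗ[ℂ] (Fin p → ℂ))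
    (B : (Fin p → ℂ) →ₗ[ℂ] Matrix (Fin m) (Fin n) ℂ) : Prop :=
  ∀ X v, eInner (A X) v = frobInner X (B v)

/-- The singular values of a complex matrix (as square roots of the eigenvalues of `Xᴴ X`). -/
noncomputable def singVals {m n : ℕ} (X : Matrix (Fin m) (Fin n) ℂ) : Fin n → ℝ :=
  fun i => Real.sqrt ((Matrix.posSemidef_conjTranspose_mul_self X).1.eigenvalues i)

/-- The nuclear norm: sum of all singular values. -/
noncomputable def nuclearNorm {m n : ℕ} (X : Matrix (Fin m) (Fin n) ℂ) : ℝ :=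
  ∑ i, singVals X i

lemma eNorm_eq {p : ℕ} (v : Fin p → ℂ) :
    eNorm v = ‖(WithLp.equiv 2 (Fin p → ℂ)).symm v‖ := by
  rw [EuclideanSpace.norm_eq]; simp [eNorm]

lemma eNorm_nonneg {p : ℕ} (v : Fin p → ℂ) : 0 ≤ eNorm v := Real.sqrt_nonneg _

lemma eNorm_add_le {p : ℕ} (u v : Fin p → ℂ) : eNorm (u + v) ≤ eNorm u + eNorm v := by
  rw [eNorm_eq, eNorm_eq, eNorm_eq]
  exact norm_add_le ((WithLp.equiv 2 (Fin p → ℂ)).symm u) ((WithLp.equiv 2 (Fin p → ℂ)).symm v)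

lemma frobInner_eq {m n : ℕ} (Y Z : Matrix (Fin m) (Fin n) ℂ) :
    frobInner Y Z = ∑ a, ∑ b, (starRingEnd ℂ) (Z a b) * Y a b := by
  simp [frobInner, Matrix.trace, Matrix.mul_apply, Matrix.diag, Matrix.conjTranspose_apply]
  exact Finset.sum_comm

lemma conj_mul_self (z : ℂ) : (starRingEnd ℂ) z * z = ((‖z‖^2 : ℝ) : ℂ) := by
  rw [mul_comm, Complex.mul_conj]; norm_cast
  rw [Complex.normSq_eq_norm_sq]

lemma frobNorm_sq {m n : ℕ} (Y : Matrix (Fin m) (Fin n) ℂ) :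
    (frobNorm Y : ℝ) ^ 2 = (frobInner Y Y).re := by
  rw [frobNorm, Real.sq_sqrt (by positivity), frobInner_eq]
  simp [conj_mul_self, Complex.re_sum, ← Complex.ofReal_pow]

open Matrix in
noncomputable def evU {m n : ℕ} (X : Matrix (Fin m) (Fin n) ℂ) : Matrix (Fin n) (Fin n) ℂ :=
  ((Matrix.posSemidef_conjTranspose_mul_self X).1.eigenvectorUnitary : Matrix (Fin n) (Fin n) ℂ)

noncomputable def evals {m n : ℕ} (X : Matrix (Fin m) (Fin n) ℂ) : Fin n → ℝ :=
  (Matrix.posSemidef_conjTranspose_mul_self X).1.eigenvalues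

noncomputable def wMat {m n : ℕ} (X : Matrix (Fin m) (Fin n) ℂ) (i : Fin n) :
    Matrix (Fin m) (Fin n) ℂ :=
  X * Matrix.vecMulVec (fun a => evU X a i) (fun b => star (evU X b i))

lemma sum_wMat {m n : ℕ} (X : Matrix (Fin m) (Fin n) ℂ) : ∑ i, wMat X i = X := by
  have hU : evU X * (evU X)ᴴ = 1 := by
    rw [← Matrix.star_eq_conjTranspose]
    exact Matrix.mem_unitaryGroup_iff.mp
      ((Matrix.posSemidef_conjTranspose_mul_self X).1.eigenvectorUnitary).2
  have key : (∑ i, Matrix.vecMulVec (fun a => evU X a i) (fun b => star (evU X b i)))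
      = (1 : Matrix (Fin n) (Fin n) ℂ) := by
    rw [← hU]
    ext a b
    simp [Matrix.vecMulVec_apply, Matrix.mul_apply, Matrix.conjTranspose_apply,
      Finset.sum_apply, Matrix.sum_apply]
  calc ∑ i, wMat X i = X * (∑ i, Matrix.vecMulVec (fun a => evU X a i)
        (fun b => star (evU X b i))) := by rw [Matrix.mul_sum]; rfl
    _ = X := by rw [key, Matrix.mul_one]

lemma star_single {n : ℕ} (k : Fin n) : star (Pi.single k 1 : Fin n → ℂ) = Pi.single k 1 := by
  ext c; simp [Pi.single_apply, apply_ite (starRingEnd ℂ)]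

lemma wMat_eq {m n : ℕ} (X : Matrix (Fin m) (Fin n) ℂ) (k : Fin n) :
    wMat X k = X * (evU X * Matrix.diagonal (Pi.single k 1) * (evU X)ᴴ) := by
  rw [wMat]
  congr 1
  ext a b
  simp [Matrix.vecMulVec_apply, Matrix.mul_apply, Matrix.mul_diagonal,
    Matrix.conjTranspose_apply, Matrix.diagonal_apply, Pi.single_apply, mul_ite, ite_mul,
    Finset.sum_ite_eq, Finset.sum_ite_eq']

lemma frobInner_wMat {m n : ℕ} (X : Matrix (Fin m) (Fin n) ℂ) (i j : Fin n) :
    frobInner (wMat X i) (wMat X j) = if i = j then ((evals X i : ℝ) : ℂ) else 0 := by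
  classical
  have hUU : (evU X)ᴴ * evU X = 1 := by
    rw [← Matrix.star_eq_conjTranspose]
    exact Matrix.mem_unitaryGroup_iff'.mp
      ((Matrix.posSemidef_conjTranspose_mul_self X).1.eigenvectorUnitary).2
  have hspec : Xᴴ * X = evU X * Matrix.diagonal (RCLike.ofReal ∘ evals X) * (evU X)ᴴ :=
    (Matrix.posSemidef_conjTranspose_mul_self X).1.spectral_theorem
  have hc : ∀ M : Matrix (Fin n) (Fin n) ℂ, (evU X)ᴴ * (evU X * M) = M := by
    intro M; rw [← Matrix.mul_assoc, hUU, Matrix.one_mul]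
  have key : (wMat X j)ᴴ * wMat X i
      = evU X * (Matrix.diagonal (Pi.single j 1) * Matrix.diagonal (RCLike.ofReal ∘ evals X)
          * Matrix.diagonal (Pi.single i 1)) * (evU X)ᴴ := by
    rw [wMat_eq, wMat_eq]
    simp only [Matrix.conjTranspose_mul, Matrix.conjTranspose_conjTranspose,
      Matrix.diagonal_conjTranspose, star_single, Matrix.mul_assoc]
    rw [← Matrix.mul_assoc Xᴴ X, hspec]
    simp only [Matrix.mul_assoc, hc]
  rw [frobInner, key]
  rw [Matrix.trace_mul_comm, ← Matrix.mul_assoc, hUU, Matrix.one_mul,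
    Matrix.diagonal_mul_diagonal, Matrix.diagonal_mul_diagonal, Matrix.trace_diagonal]
  by_cases h : i = j
  · subst h
    simp [Pi.single_apply, ite_mul, mul_ite, Finset.sum_ite_eq']
  · rw [if_neg h]
    apply Finset.sum_eq_zero
    intro c _
    rcases ne_or_eq c i with hc | rfl
    · simp [Pi.single_apply, hc]
    · simp [Pi.single_apply, Ne.symm h]

lemma frobInner_sum_left {m n : ℕ} {ι : Type*} (f : ι → Matrix (Fin m) (Fin n) ℂ)
    (T : Finset ι) (Z : Matrix (Fin m) (Fin n) ℂ) :
    frobInner (∑ i ∈ T, f i) Z = ∑ i ∈ T, frobInner (f i) Z := by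
  simp [frobInner, Matrix.mul_sum]

lemma frobInner_sum_right {m n : ℕ} {ι : Type*} (Y : Matrix (Fin m) (Fin n) ℂ)
    (f : ι → Matrix (Fin m) (Fin n) ℂ) (T : Finset ι) :
    frobInner Y (∑ j ∈ T, f j) = ∑ j ∈ T, frobInner Y (f j) := by
  simp [frobInner, Matrix.conjTranspose_sum, Matrix.sum_mul]

lemma frobNorm_nonneg {m n : ℕ} (Y : Matrix (Fin m) (Fin n) ℂ) : 0 ≤ frobNorm Y :=
  Real.sqrt_nonneg _

lemma evals_nonneg {m n : ℕ} (X : Matrix (Fin m) (Fin n) ℂ) (i : Fin n) : 0 ≤ evals X i :=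
  (Matrix.posSemidef_conjTranspose_mul_self X).eigenvalues_nonneg i

lemma singVals_sq {m n : ℕ} (X : Matrix (Fin m) (Fin n) ℂ) (i : Fin n) :
    singVals X i ^ 2 = evals X i := Real.sq_sqrt (evals_nonneg X i)

lemma singVals_nonneg {m n : ℕ} (X : Matrix (Fin m) (Fin n) ℂ) (i : Fin n) :
    0 ≤ singVals X i := Real.sqrt_nonneg _

lemma frobNorm_sq_sum_wMat {m n : ℕ} (X : Matrix (Fin m) (Fin n) ℂ) (T : Finset (Fin n)) :
    frobNorm (∑ i ∈ T, wMat X i) ^ 2 = ∑ i ∈ T, evals X i := by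
  rw [frobNorm_sq, frobInner_sum_left]
  have h1 : ∀ i ∈ T, frobInner (wMat X i) (∑ j ∈ T, wMat X j) = ((evals X i : ℝ) : ℂ) := by
    intro i hi
    rw [frobInner_sum_right]
    rw [Finset.sum_congr rfl (fun j _ => frobInner_wMat X i j), Finset.sum_ite_eq T i, if_pos hi]
  rw [Finset.sum_congr rfl h1]
  simp [Complex.re_sum]

lemma rank_vecMulVec_le {k l : ℕ} (u : Fin k → ℂ) (v : Fin l → ℂ) :
    (Matrix.vecMulVec u v).rank ≤ 1 := by
  rw [Matrix.rank]
  have hle : LinearMap.range (Matrix.vecMulVec u v).mulVecLin ≤ Submodule.span ℂ {u} := by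
    rintro - ⟨x, rfl⟩
    apply Submodule.mem_span_singleton.mpr
    refine ⟨dotProduct v x, ?_⟩
    ext a
    simp [Matrix.mulVecLin, Matrix.mulVec, Matrix.vecMulVec_apply, dotProduct,
      Finset.mul_sum, mul_comm, mul_assoc, mul_left_comm]
  refine le_trans (Submodule.finrank_mono hle) ?_
  refine le_trans (finrank_span_le_card ({u} : Set (Fin k → ℂ))) ?_
  simp

lemma matrix_rank_add_le {m n : ℕ} (A B : Matrix (Fin m) (Fin n) ℂ) :
    (A + B).rank ≤ A.rank + B.rank := by
  rw [Matrix.rank, Matrix.rank, Matrix.rank]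
  have h : LinearMap.range (A + B).mulVecLin
      ≤ LinearMap.range A.mulVecLin ⊔ LinearMap.range B.mulVecLin := by
    rintro - ⟨x, rfl⟩
    rw [Matrix.mulVecLin_add]
    exact Submodule.mem_sup.mpr ⟨_, ⟨x, rfl⟩, _, ⟨x, rfl⟩, rfl⟩
  exact le_trans (Submodule.finrank_mono h)
    (Submodule.finrank_add_le_finrank_add_finrank _ _)

lemma rank_sum_le {m n : ℕ} (T : Finset (Fin n)) (X : Matrix (Fin m) (Fin n) ℂ) :
    (∑ i ∈ T, wMat X i).rank ≤ T.card := by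
  classical
  induction T using Finset.induction_on with
  | empty => simp
  | insert a s hnot ih =>
    rw [Finset.sum_insert hnot, Finset.card_insert_of_notMem hnot]
    refine le_trans (matrix_rank_add_le _ _) ?_
    have : (wMat X a).rank ≤ 1 := le_trans (Matrix.rank_mul_le_right _ _) (rank_vecMulVec_le _ _)
    omega

lemma eNorm_zero {p : ℕ} : eNorm (0 : Fin p → ℂ) = 0 := by simp [eNorm]

lemma eNorm_sum_le {p : ℕ} {ι : Type*} (T : Finset ι) (f : ι → (Fin p → ℂ)) :
    eNorm (∑ i ∈ T, f i) ≤ ∑ i ∈ T, eNorm (f i) := by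
  classical
  induction T using Finset.induction_on with
  | empty => simp [eNorm_zero]
  | insert a s hnot ih =>
    rw [Finset.sum_insert hnot, Finset.sum_insert hnot]
    exact le_trans (eNorm_add_le _ _) (by linarith)

lemma exists_top {n : ℕ} (σ : Fin n → ℝ) (S : Finset (Fin n)) (k : ℕ) (hk : k ≤ S.card) :
    ∃ T : Finset (Fin n), T ⊆ S ∧ T.card = k ∧ ∀ i ∈ T, ∀ j ∈ S \ T, σ j ≤ σ i := by
  induction k with
  | zero => exact ⟨∅, by simp, rfl, by simp⟩
  | succ k ih =>
    obtain ⟨T, hTS, hTc, hdom⟩ := ih (le_trans (Nat.le_succ k) hk)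
    have hne : (S \ T).Nonempty := by
      rw [← Finset.card_pos, Finset.card_sdiff_of_subset hTS]; omega
    obtain ⟨a, haST, hamax⟩ := Finset.exists_max_image (S \ T) σ hne
    have haT : a ∉ T := (Finset.mem_sdiff.mp haST).2
    refine ⟨insert a T, ?_, ?_, ?_⟩
    · intro x hx
      rcases Finset.mem_insert.mp hx with rfl | hx
      · exact (Finset.mem_sdiff.mp haST).1
      · exact hTS hx
    · rw [Finset.card_insert_of_notMem haT, hTc]
    · intro i hi j hj
      have hj' : j ∈ S \ T := by
        rw [Finset.mem_sdiff] at hj ⊢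
        exact ⟨hj.1, fun h => hj.2 (Finset.mem_insert_of_mem h)⟩
      rcases Finset.mem_insert.mp hi with rfl | hi
      · exact hamax j hj'
      · exact hdom i hi j hj'

section Main

variable {m n p r : ℕ} (A : Matrix (Fin m) (Fin n) ℂ →ₗ[ℂ] (Fin p → ℂ)) (δ : ℝ)

lemma apply_bound (hδ0 : 0 ≤ δ)
    (hA : ∀ Y : Matrix (Fin m) (Fin n) ℂ, Y.rank ≤ r →
      eNorm (A Y) ^ 2 ≤ (1 + δ) * frobNorm Y ^ 2)
    (X : Matrix (Fin m) (Fin n) ℂ) (S : Finset (Fin n)) (hS : S.card ≤ r) :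
    eNorm (A (∑ i ∈ S, wMat X i)) ≤ Real.sqrt (1 + δ) * frobNorm (∑ i ∈ S, wMat X i) := by
  have h := hA _ (le_trans (rank_sum_le S X) hS)
  have h2 : eNorm (A (∑ i ∈ S, wMat X i))
      ≤ Real.sqrt ((1 + δ) * frobNorm (∑ i ∈ S, wMat X i) ^ 2) := by
    rw [← Real.sqrt_sq (eNorm_nonneg _)]
    exact Real.sqrt_le_sqrt h
  rwa [Real.sqrt_mul (by linarith), Real.sqrt_sq (frobNorm_nonneg _)] at h2

lemma fn_le_of_bound (X : Matrix (Fin m) (Fin n) ℂ) (S : Finset (Fin n)) (hS : S.card ≤ r)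
    (c : ℝ) (hc : 0 ≤ c) (hσ : ∀ i ∈ S, singVals X i ≤ c) :
    frobNorm (∑ i ∈ S, wMat X i) ≤ Real.sqrt r * c := by
  have h1 : frobNorm (∑ i ∈ S, wMat X i) ^ 2 ≤ (r : ℝ) * c ^ 2 := by
    rw [frobNorm_sq_sum_wMat]
    calc ∑ i ∈ S, evals X i = ∑ i ∈ S, singVals X i ^ 2 := by
          exact Finset.sum_congr rfl fun i _ => (singVals_sq X i).symm
      _ ≤ S.card • (c ^ 2) := Finset.sum_le_card_nsmul S _ _
          (fun i hi => pow_le_pow_left₀ (singVals_nonneg X i) (hσ i hi) 2)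
      _ = (S.card : ℝ) * c ^ 2 := by rw [nsmul_eq_mul]
      _ ≤ (r : ℝ) * c ^ 2 := by
          apply mul_le_mul_of_nonneg_right _ (sq_nonneg c)
          exact_mod_cast hS
  have h2 := Real.sqrt_le_sqrt h1
  rwa [Real.sqrt_sq (frobNorm_nonneg _), Real.sqrt_mul (Nat.cast_nonneg r),
    Real.sqrt_sq hc] at h2

lemma sqrt_r_mul_div (hr : 1 ≤ r) (s : ℝ) : Real.sqrt r * (s / r) = s / Real.sqrt r := by
  have hr0 : (0:ℝ) < r := by exact_mod_cast hr
  have hs : (0:ℝ) < Real.sqrt r := Real.sqrt_pos.mpr hr0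
  rw [eq_div_iff (ne_of_gt hs)]
  have h2 : Real.sqrt r * Real.sqrt r = (r:ℝ) := Real.mul_self_sqrt (le_of_lt hr0)
  field_simp
  rw [sq, h2, mul_comm]

lemma key_claim (hr : 1 ≤ r) (hδ0 : 0 ≤ δ)
    (hA : ∀ Y : Matrix (Fin m) (Fin n) ℂ, Y.rank ≤ r →
      eNorm (A Y) ^ 2 ≤ (1 + δ) * frobNorm Y ^ 2)
    (X : Matrix (Fin m) (Fin n) ℂ) :
    ∀ k : ℕ, ∀ S : Finset (Fin n), S.card ≤ k → ∀ c : ℝ, 0 ≤ c →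
      (∀ i ∈ S, singVals X i ≤ c) →
      eNorm (A (∑ i ∈ S, wMat X i)) ≤
        Real.sqrt (1 + δ) * (Real.sqrt r * c + (∑ i ∈ S, singVals X i) / Real.sqrt r) := by
  intro k
  induction k with
  | zero =>
    intro S hS c hc hσ
    have : S = ∅ := Finset.card_eq_zero.mp (Nat.le_zero.mp hS)
    subst this
    simp only [Finset.sum_empty, map_zero, eNorm_zero]
    positivity
  | succ k ih =>
    intro S hS c hc hσ
    by_cases hcard : S.card ≤ r
    · -- base: directly apply RIP
      have h1 := apply_bound A δ hδ0 hA X S hcard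
      have h2 := fn_le_of_bound (r := r) X S hcard c hc hσ
      have h3 : (0:ℝ) ≤ Real.sqrt (1 + δ) := Real.sqrt_nonneg _
      have h4 : 0 ≤ (∑ i ∈ S, singVals X i) / Real.sqrt r := by
        apply div_nonneg (Finset.sum_nonneg fun i _ => singVals_nonneg X i) (Real.sqrt_nonneg _)
      nlinarith [mul_le_mul_of_nonneg_left h2 h3]
    · push_neg at hcard
      obtain ⟨T, hTS, hTc, hdom⟩ := exists_top (singVals X) S r (le_of_lt hcard)
      have hsplit : ∑ i ∈ S, wMat X i = (∑ i ∈ T, wMat X i) + ∑ i ∈ S \ T, wMat X i := by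
        rw [add_comm, Finset.sum_sdiff hTS]
      set c' : ℝ := (∑ i ∈ T, singVals X i) / r with hc'
      have hc'0 : 0 ≤ c' := by
        apply div_nonneg (Finset.sum_nonneg fun i _ => singVals_nonneg X i) (Nat.cast_nonneg r)
      have hσ' : ∀ j ∈ S \ T, singVals X j ≤ c' := by
        intro j hj
        rw [hc', le_div_iff₀ (by exact_mod_cast hr : (0:ℝ) < r)]
        calc singVals X j * r = ∑ _i ∈ T, singVals X j := by
              rw [Finset.sum_const, hTc, nsmul_eq_mul, mul_comm]
          _ ≤ ∑ i ∈ T, singVals X i := Finset.sum_le_sum fun i hi => hdom i hi j hj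
      have hcard' : (S \ T).card ≤ k := by
        rw [Finset.card_sdiff_of_subset hTS, hTc]; omega
      have hIH := ih (S \ T) hcard' c' hc'0 hσ'
      -- triangle inequality
      have htri : eNorm (A (∑ i ∈ S, wMat X i))
          ≤ eNorm (A (∑ i ∈ T, wMat X i)) + eNorm (A (∑ i ∈ S \ T, wMat X i)) := by
        rw [hsplit, map_add]; exact eNorm_add_le _ _
      have hT1 : eNorm (A (∑ i ∈ T, wMat X i)) ≤ Real.sqrt (1 + δ) * (Real.sqrt r * c) := by
        refine le_trans (apply_bound A δ hδ0 hA X T (le_of_eq hTc)) ?_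
        exact mul_le_mul_of_nonneg_left
          (fn_le_of_bound (r := r) X T (le_of_eq hTc) c hc fun i hi => hσ i (hTS hi))
          (Real.sqrt_nonneg _)
      have hkey : Real.sqrt r * c' = (∑ i ∈ T, singVals X i) / Real.sqrt r := by
        rw [hc']; exact sqrt_r_mul_div hr _
      have hsum : (∑ i ∈ T, singVals X i) + ∑ i ∈ S \ T, singVals X i
          = ∑ i ∈ S, singVals X i := by
        rw [add_comm]; exact Finset.sum_sdiff hTS
      have h3 : (0:ℝ) ≤ Real.sqrt (1 + δ) := Real.sqrt_nonneg _
      calc eNorm (A (∑ i ∈ S, wMat X i))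
          ≤ Real.sqrt (1 + δ) * (Real.sqrt r * c)
            + Real.sqrt (1 + δ) * (Real.sqrt r * c' + (∑ i ∈ S \ T, singVals X i) / Real.sqrt r) := by
            linarith
        _ = Real.sqrt (1 + δ) * (Real.sqrt r * c + (∑ i ∈ S, singVals X i) / Real.sqrt r) := by
            rw [hkey, ← hsum]; rw [add_div]; ring

end Main


/-- If `‖A X‖₂² ≤ (1+δ)‖X‖_F²` for all rank-`≤ r` matrices, then for every matrix `X`,
`‖A X‖₂ ≤ √(1+δ) (‖X‖_F + ‖X‖_*/√r)`. -/
theorem energy_bound {m n p r : ℕ} (hr : 1 ≤ r)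
    (A : Matrix (Fin m) (Fin n) ℂ →ₗ[ℂ] (Fin p → ℂ)) (δ : ℝ) (hδ0 : 0 ≤ δ)
    (hA : ∀ X : Matrix (Fin m) (Fin n) ℂ, X.rank ≤ r →
      eNorm (A X) ^ 2 ≤ (1 + δ) * frobNorm X ^ 2) :
    ∀ X : Matrix (Fin m) (Fin n) ℂ,
      eNorm (A X) ≤ Real.sqrt (1 + δ) * (frobNorm X + nuclearNorm X / Real.sqrt r) := by
  intro X
  have hXsum : ∑ i, wMat X i = X := sum_wMat X
  have hnn0 : 0 ≤ nuclearNorm X := Finset.sum_nonneg fun i _ => singVals_nonneg X i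
  have hsr : (0:ℝ) < Real.sqrt r :=
    Real.sqrt_pos.mpr (by exact_mod_cast hr : (0:ℝ) < r)
  have hfnX : frobNorm X ^ 2 = ∑ i, evals X i := by
    conv_lhs => rw [← hXsum]
    exact frobNorm_sq_sum_wMat X Finset.univ
  by_cases hnr : (Finset.univ : Finset (Fin n)).card ≤ r
  · have h1 : eNorm (A X) ≤ Real.sqrt (1 + δ) * frobNorm X := by
      have := apply_bound A δ hδ0 hA X Finset.univ hnr
      rwa [hXsum] at this
    have h2 : 0 ≤ nuclearNorm X / Real.sqrt r := div_nonneg hnn0 (le_of_lt hsr)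
    nlinarith [Real.sqrt_nonneg (1 + δ), frobNorm_nonneg X]
  · push_neg at hnr
    obtain ⟨T, hTS, hTc, hdom⟩ := exists_top (singVals X) Finset.univ r (le_of_lt hnr)
    have hsplit : (∑ i ∈ T, wMat X i) + ∑ i ∈ Finset.univ \ T, wMat X i = X := by
      rw [add_comm, Finset.sum_sdiff hTS]; exact hXsum
    set c' : ℝ := (∑ i ∈ T, singVals X i) / r with hc'
    have hc'0 : 0 ≤ c' :=
      div_nonneg (Finset.sum_nonneg fun i _ => singVals_nonneg X i) (Nat.cast_nonneg r)
    have hσ' : ∀ j ∈ Finset.univ \ T, singVals X j ≤ c' := by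
      intro j hj
      rw [hc', le_div_iff₀ (by exact_mod_cast hr : (0:ℝ) < r)]
      calc singVals X j * r = ∑ _i ∈ T, singVals X j := by
            rw [Finset.sum_const, hTc, nsmul_eq_mul, mul_comm]
        _ ≤ ∑ i ∈ T, singVals X i := Finset.sum_le_sum fun i hi => hdom i hi j hj
    have hIH := key_claim A δ hr hδ0 hA X (Finset.univ \ T).card (Finset.univ \ T)
      le_rfl c' hc'0 hσ'
    have htri : eNorm (A X) ≤ eNorm (A (∑ i ∈ T, wMat X i))
        + eNorm (A (∑ i ∈ Finset.univ \ T, wMat X i)) := by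
      conv_lhs => rw [← hsplit]
      rw [map_add]; exact eNorm_add_le _ _
    have hfnT : frobNorm (∑ i ∈ T, wMat X i) ≤ frobNorm X := by
      have h1 : frobNorm (∑ i ∈ T, wMat X i) ^ 2 ≤ frobNorm X ^ 2 := by
        rw [frobNorm_sq_sum_wMat, hfnX]
        exact Finset.sum_le_sum_of_subset_of_nonneg hTS fun i _ _ => evals_nonneg X i
      have h2 := Real.sqrt_le_sqrt h1
      rwa [Real.sqrt_sq (frobNorm_nonneg _), Real.sqrt_sq (frobNorm_nonneg _)] at h2
    have hT1 : eNorm (A (∑ i ∈ T, wMat X i)) ≤ Real.sqrt (1 + δ) * frobNorm X :=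
      le_trans (apply_bound A δ hδ0 hA X T (le_of_eq hTc))
        (mul_le_mul_of_nonneg_left hfnT (Real.sqrt_nonneg _))
    have hkey : Real.sqrt r * c' = (∑ i ∈ T, singVals X i) / Real.sqrt r := by
      rw [hc']; exact sqrt_r_mul_div hr _
    have hsum : (∑ i ∈ T, singVals X i) + ∑ i ∈ Finset.univ \ T, singVals X i
        = nuclearNorm X := by
      rw [nuclearNorm, add_comm]; exact Finset.sum_sdiff hTS
    calc eNorm (A X) ≤ Real.sqrt (1 + δ) * frobNorm X
          + Real.sqrt (1 + δ) * (Real.sqrt r * c'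
            + (∑ i ∈ Finset.univ \ T, singVals X i) / Real.sqrt r) := by linarith
      _ = Real.sqrt (1 + δ) * (frobNorm X + nuclearNorm X / Real.sqrt r) := by
          rw [hkey, ← hsum, add_div]; ring
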